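/- Let C be a simple graph on n ≥ 1 vertices and let t ≥ 1. Then lim_{m→∞} k_t( complement of C[m] ) / binomial(mn, t) = ( Σ_{j=1}^{t} j! · S(t,j) · k_j(Ḡ_C) ) / n^t, where Ḡ_C is the complement of C, C[m] is the m-fold blow-up of C, and S(t,j) = Σ_{i=0}^{j} (−1)^i · binomial(j,i) · (j−i)^t / j! is the Stirling number of the second kind. -/

import Mathlib

open Filter Topology

/-- `kcount t G` is the number of `t`-element vertex subsets of `G` inducing a clique,
i.e. the number of copies of `K_t` in `G`. -/
noncomputable def kcount {V : Type*} (t : ℕ) (G : SimpleGraph V) : ℕ :=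
  Nat.card {s : Finset V // G.IsNClique t s}

/-- The Stirling number of the second kind, via the explicit formula
`S(t,j) = (1/j!) · Σ_{i=0}^{j} (−1)^i · C(j,i) · (j−i)^t`. -/
noncomputable def stirling2 (t j : ℕ) : ℝ :=
  (∑ i ∈ Finset.range (j + 1),
      (-1 : ℝ) ^ i * (j.choose i : ℝ) * ((j - i : ℕ) : ℝ) ^ t) / (j.factorial : ℝ)

open Finset Function

section Aux

open scoped Classical in
/-- Number of surjections `Fin t → Fin j`. -/
noncomputable def surjCard (t j : ℕ) : ℕ :=
  (Finset.univ.filter fun g : Fin t → Fin j => Function.Surjective g).card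

/-- Functions with image exactly `s` correspond to surjections onto `Fin s.card`. -/
noncomputable def imageEquivSurj {α : Type*} [DecidableEq α] (t : ℕ) (s : Finset α) :
    {g : Fin t → α // Finset.image g Finset.univ = s} ≃
      {g : Fin t → Fin s.card // Function.Surjective g} where
  toFun g := ⟨fun a => s.equivFin ⟨g.1 a, by
      have := Finset.mem_image_of_mem g.1 (Finset.mem_univ a); rwa [g.2] at this⟩, by
    intro y
    have hy : (↑(s.equivFin.symm y) : α) ∈ Finset.image g.1 Finset.univ := by
      rw [g.2]; exact (s.equivFin.symm y).2
    obtain ⟨a, -, ha⟩ := Finset.mem_image.mp hy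
    refine ⟨a, ?_⟩
    have h2 : (⟨g.1 a, by
        have := Finset.mem_image_of_mem g.1 (Finset.mem_univ a); rwa [g.2] at this⟩ :
        {x // x ∈ s}) = s.equivFin.symm y := Subtype.ext ha
    simp only [h2, Equiv.apply_symm_apply]⟩
  invFun h := ⟨fun a => ↑(s.equivFin.symm (h.1 a)), by
    apply Finset.Subset.antisymm
    · intro x hx
      obtain ⟨a, -, ha⟩ := Finset.mem_image.mp hx
      rw [← ha]; exact (s.equivFin.symm (h.1 a)).2
    · intro x hx
      obtain ⟨a, ha⟩ := h.2 (s.equivFin ⟨x, hx⟩)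
      refine Finset.mem_image.mpr ⟨a, Finset.mem_univ a, ?_⟩
      rw [ha, Equiv.symm_apply_apply]⟩
  left_inv g := by
    apply Subtype.ext; funext a
    simp
  right_inv h := by
    apply Subtype.ext; funext a
    simp

lemma card_image_eq_surjCard {α : Type*} [Fintype α] [DecidableEq α] (t : ℕ) (s : Finset α)
    [DecidablePred fun g : Fin t → α => Finset.image g Finset.univ = s] :
    (Finset.univ.filter fun g : Fin t → α => Finset.image g Finset.univ = s).card
      = surjCard t s.card := by
  classical
  rw [surjCard, ← Fintype.card_subtype, ← Fintype.card_subtype]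
  exact Fintype.card_congr (imageEquivSurj t s)

lemma surjCard_self (t : ℕ) : surjCard t t = t.factorial := by
  classical
  rw [surjCard, ← Fintype.card_subtype]
  have hp : Fintype.card (Equiv.Perm (Fin t)) = t.factorial := by
    rw [Fintype.card_perm, Fintype.card_fin]
  rw [← hp]
  refine Fintype.card_congr ?_
  exact
  { toFun := fun g => Equiv.ofBijective g.1
      ((Fintype.bijective_iff_surjective_and_card g.1).2 ⟨g.2, rfl⟩)
    invFun := fun π => ⟨π, π.surjective⟩
    left_inv := fun g => Subtype.ext rfl
    right_inv := fun π => Equiv.ext fun a => rfl }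

lemma surjCard_eq_zero {t j : ℕ} (h : j ∉ Finset.Icc 1 t) (ht : 1 ≤ t) : surjCard t j = 0 := by
  classical
  rw [surjCard, Finset.card_eq_zero, Finset.filter_eq_empty_iff]
  intro g _
  simp only [Finset.mem_Icc, not_and_or, not_le] at h
  rcases h with h | h
  · have hj : j = 0 := by omega
    subst hj
    exact fun _ => (g ⟨0, ht⟩).elim0
  · intro hs
    have := Fintype.card_le_of_surjective g hs
    simp only [Fintype.card_fin] at this
    omega

open scoped Classical in
lemma sum_choose_surjCard (t j : ℕ) :
    ∑ i ∈ Finset.range (j + 1), j.choose i * surjCard t i = j ^ t := by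
  have h := Finset.card_eq_sum_card_fiberwise
    (f := fun g : Fin t → Fin j => Finset.image g Finset.univ)
    (s := Finset.univ) (t := Finset.univ) (fun x _ => Finset.mem_univ _)
  rw [Finset.card_univ, Fintype.card_fun, Fintype.card_fin, Fintype.card_fin] at h
  rw [h]
  have h2 : ∀ s ∈ (Finset.univ : Finset (Finset (Fin j))),
      (Finset.univ.filter fun g : Fin t → Fin j => Finset.image g Finset.univ = s).card
        = surjCard t s.card := fun s _ => card_image_eq_surjCard t s
  rw [Finset.sum_congr rfl h2]
  rw [← Finset.sum_fiberwise_of_maps_to (g := fun s : Finset (Fin j) => s.card)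
    (t := Finset.range (j + 1)) (fun s _ => by
      rw [Finset.mem_range, Nat.lt_succ_iff]
      exact (Finset.card_le_univ s).trans (by simp))]
  apply Finset.sum_congr rfl
  intro i _
  have h3 : ∀ s ∈ Finset.univ.filter (fun s : Finset (Fin j) => s.card = i),
      surjCard t s.card = surjCard t i := by
    intro s hs
    rw [Finset.mem_filter] at hs
    rw [hs.2]
  rw [Finset.sum_congr rfl h3, Finset.sum_const, smul_eq_mul]
  congr 1
  rw [← Finset.powerset_univ, ← Finset.powersetCard_eq_filter, Finset.card_powersetCard,
    Finset.card_univ, Fintype.card_fin]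

lemma sum_choose_T (t j : ℕ) :
    ∑ k ∈ Finset.range (j + 1), (j.choose k : ℝ) *
      (∑ i ∈ Finset.range (k + 1), (-1 : ℝ) ^ i * (k.choose i : ℝ) * ((k - i : ℕ) : ℝ) ^ t)
      = (j : ℝ) ^ t := by
  have hT : ∀ k, (∑ i ∈ Finset.range (k + 1), (-1:ℝ)^i * (k.choose i : ℝ) * ((k - i : ℕ):ℝ)^t)
      = ∑ i ∈ Finset.range (k + 1), (-1:ℝ)^(k - i) * (k.choose i : ℝ) * (i:ℝ)^t := by
    intro k
    rw [← Finset.sum_range_reflect (fun i => (-1:ℝ)^(k - i) * (k.choose i : ℝ) * (i:ℝ)^t) (k+1)]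
    apply Finset.sum_congr rfl
    intro i hi
    rw [Finset.mem_range] at hi
    have hik : i ≤ k := Nat.lt_succ_iff.mp hi
    have h1 : k + 1 - 1 - i = k - i := by omega
    rw [h1]
    have h2 : k - (k - i) = i := by omega
    rw [h2, Nat.choose_symm hik]
  simp only [hT]
  have hext : ∀ k ∈ Finset.range (j+1),
      (j.choose k : ℝ) * ∑ i ∈ Finset.range (k + 1), (-1:ℝ)^(k-i) * (k.choose i : ℝ) * (i:ℝ)^t
      = ∑ i ∈ Finset.range (j + 1), (j.choose k : ℝ) * ((-1:ℝ)^(k-i) * (k.choose i : ℝ) * (i:ℝ)^t) := by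
    intro k hk
    rw [Finset.mem_range] at hk
    rw [Finset.mul_sum]
    apply Finset.sum_subset
    · intro x hx
      rw [Finset.mem_range] at *
      omega
    · intro x hx hxn
      rw [Finset.mem_range, not_lt] at hxn
      have hz : k.choose x = 0 := Nat.choose_eq_zero_of_lt (by omega)
      simp [hz]
  rw [Finset.sum_congr rfl hext, Finset.sum_comm]
  have hinner : ∀ i ∈ Finset.range (j+1),
      (∑ k ∈ Finset.range (j+1), (j.choose k : ℝ) * ((-1:ℝ)^(k-i) * (k.choose i : ℝ) * (i:ℝ)^t))
      = if i = j then (j:ℝ)^t else 0 := by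
    intro i hi
    rw [Finset.mem_range, Nat.lt_succ_iff] at hi
    have step1 : (∑ k ∈ Finset.range (j+1), (j.choose k : ℝ) * ((-1:ℝ)^(k-i) * (k.choose i : ℝ) * (i:ℝ)^t))
        = ∑ k ∈ Finset.Ico i (j+1), (j.choose k : ℝ) * ((-1:ℝ)^(k-i) * (k.choose i : ℝ) * (i:ℝ)^t) := by
      symm
      apply Finset.sum_subset
      · intro x hx
        rw [Finset.mem_Ico] at hx
        rw [Finset.mem_range]
        omega
      · intro x hx hxn
        rw [Finset.mem_range] at hx
        rw [Finset.mem_Ico, not_and_or, not_le] at hxn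
        have hxi : x < i := by omega
        have hz : x.choose i = 0 := Nat.choose_eq_zero_of_lt hxi
        simp [hz]
    rw [step1, Finset.sum_Ico_eq_sum_range]
    have hterm : ∀ d ∈ Finset.range (j + 1 - i),
        (j.choose (i+d) : ℝ) * ((-1:ℝ)^(i+d-i) * ((i+d).choose i : ℝ) * (i:ℝ)^t)
        = (j.choose i : ℝ) * (i:ℝ)^t * ((-1:ℝ)^d * ((j-i).choose d : ℝ)) := by
      intro d hd
      rw [Finset.mem_range] at hd
      have h1 : i + d - i = d := by omega
      have h2 : (j.choose (i+d)) * ((i+d).choose i) = j.choose i * (j-i).choose d := by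
        have h3 := Nat.choose_mul (n := j) (k := i + d) (s := i) (by omega)
        rw [h3, h1]
      rw [h1]
      have : (j.choose (i+d) : ℝ) * (((i+d).choose i : ℝ)) = (j.choose i : ℝ) * ((j-i).choose d : ℝ) := by
        exact_mod_cast congrArg (Nat.cast : ℕ → ℝ) h2
      linear_combination ((-1:ℝ)^d * (i:ℝ)^t) * this
    rw [Finset.sum_congr rfl hterm, ← Finset.mul_sum]
    have hrange : j + 1 - i = (j - i) + 1 := by omega
    rw [hrange]
    have halt : (∑ d ∈ Finset.range ((j-i)+1), (-1:ℝ)^d * ((j-i).choose d : ℝ))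
        = if j - i = 0 then 1 else 0 := by
      have h := Int.alternating_sum_range_choose (n := j - i)
      have h2 := congrArg (fun z : ℤ => (z : ℝ)) h
      push_cast at h2
      simpa using h2
    rw [halt]
    by_cases hij : i = j
    · subst hij
      simp
    · have : j - i ≠ 0 := by omega
      simp [this, hij]
  rw [Finset.sum_congr rfl hinner, Finset.sum_ite_eq' (Finset.range (j+1)) j (fun _ => (j:ℝ)^t)]
  simp

lemma surjCard_eq_real (t j : ℕ) :
    (surjCard t j : ℝ) = ∑ i ∈ Finset.range (j + 1),
      (-1 : ℝ) ^ i * (j.choose i : ℝ) * ((j - i : ℕ) : ℝ) ^ t := by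
  induction j using Nat.strong_induction_on with
  | _ j ih =>
    have hS : ∑ i ∈ Finset.range (j + 1), (j.choose i : ℝ) * (surjCard t i : ℝ) = (j:ℝ)^t := by
      have := congrArg (Nat.cast : ℕ → ℝ) (sum_choose_surjCard t j)
      push_cast at this
      exact this
    have hT := sum_choose_T t j
    rw [Finset.sum_range_succ] at hS hT
    have heq : ∀ i ∈ Finset.range j, (j.choose i : ℝ) * (surjCard t i : ℝ)
        = (j.choose i : ℝ) * (∑ l ∈ Finset.range (i + 1), (-1:ℝ)^l * (i.choose l : ℝ) * ((i - l : ℕ):ℝ)^t) := by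
      intro i hi
      rw [Finset.mem_range] at hi
      rw [ih i hi]
    rw [Finset.sum_congr rfl heq] at hS
    rw [Nat.choose_self] at hS hT
    push_cast at hS hT
    linarith

lemma kcount_eq {V : Type*} [Fintype V] (j : ℕ) (G : SimpleGraph V)
    [DecidablePred fun s : Finset V => G.IsNClique j s] :
    kcount j G = (Finset.univ.filter fun s : Finset V => G.IsNClique j s).card := by
  rw [kcount, Nat.card_eq_fintype_card, Fintype.card_subtype]

open scoped Classical in
/-- L3: counting maps with independent image. -/
lemma card_good (n t : ℕ) (ht : 1 ≤ t) (C : SimpleGraph (Fin n)) :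
    (Finset.univ.filter fun g : Fin t → Fin n => ∀ a b, ¬ C.Adj (g a) (g b)).card
      = ∑ j ∈ Finset.Icc 1 t, surjCard t j * kcount j Cᶜ := by
  set T : Finset (Finset (Fin n)) :=
    Finset.univ.filter (fun s : Finset (Fin n) => ∀ x ∈ s, ∀ y ∈ s, ¬ C.Adj x y) with hT
  rw [Finset.card_eq_sum_card_fiberwise
    (f := fun g : Fin t → Fin n => Finset.image g Finset.univ) (t := T)
    (fun g hg => by
      rw [Finset.mem_coe, Finset.mem_filter] at hg
      rw [Finset.mem_coe, hT, Finset.mem_filter]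
      refine ⟨Finset.mem_univ _, fun x hx y hy => ?_⟩
      obtain ⟨a, -, ha⟩ := Finset.mem_image.mp hx
      obtain ⟨b, -, hb⟩ := Finset.mem_image.mp hy
      rw [← ha, ← hb]
      exact hg.2 a b)]
  have hfib : ∀ s ∈ T,
      ((Finset.univ.filter fun g : Fin t → Fin n => ∀ a b, ¬ C.Adj (g a) (g b)).filter
        (fun g => Finset.image g Finset.univ = s)).card = surjCard t s.card := by
    intro s hs
    rw [hT, Finset.mem_filter] at hs
    rw [Finset.filter_filter]
    have : ∀ g : Fin t → Fin n,
        ((∀ a b, ¬ C.Adj (g a) (g b)) ∧ Finset.image g Finset.univ = s)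
          ↔ Finset.image g Finset.univ = s := by
      intro g
      constructor
      · exact fun h => h.2
      · intro h
        refine ⟨fun a b => hs.2 (g a) ?_ (g b) ?_, h⟩ <;>
          (rw [← h]; exact Finset.mem_image_of_mem _ (Finset.mem_univ _))
    simp only [this]
    exact card_image_eq_surjCard t s
  rw [Finset.sum_congr rfl hfib]
  -- split off terms with card outside Icc 1 t
  rw [← Finset.sum_filter_add_sum_filter_not T (fun s => s.card ∈ Finset.Icc 1 t)]
  have hzero : ∑ s ∈ T.filter (fun s => s.card ∉ Finset.Icc 1 t), surjCard t s.card = 0 := by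
    apply Finset.sum_eq_zero
    intro s hs
    rw [Finset.mem_filter] at hs
    exact surjCard_eq_zero hs.2 ht
  rw [hzero, add_zero]
  rw [← Finset.sum_fiberwise_of_maps_to (g := fun s : Finset (Fin n) => s.card)
    (t := Finset.Icc 1 t) (fun s hs => (Finset.mem_filter.mp hs).2)]
  apply Finset.sum_congr rfl
  intro j hj
  have h1 : ∀ s ∈ (T.filter (fun s => s.card ∈ Finset.Icc 1 t)).filter (fun s => s.card = j),
      surjCard t s.card = surjCard t j := by
    intro s hs
    rw [Finset.mem_filter] at hs
    rw [hs.2]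
  rw [Finset.sum_congr rfl h1, Finset.sum_const, smul_eq_mul, mul_comm]
  congr 1
  rw [kcount_eq]
  congr 1
  ext s
  simp only [Finset.mem_filter, Finset.mem_univ, true_and, hT]
  constructor
  · rintro ⟨⟨hpair, -⟩, hcard⟩
    refine ⟨fun x hx y hy hxy => ?_, hcard⟩
    rw [SimpleGraph.compl_adj]
    exact ⟨hxy, hpair x hx y hy⟩
  · rintro ⟨hclq, hcard⟩
    refine ⟨⟨fun x hx y hy => ?_, by rw [hcard]; exact hj⟩, hcard⟩
    by_cases hxy : x = y
    · subst hxy; exact C.irrefl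
    · exact ((SimpleGraph.compl_adj C x y).mp (hclq hx hy hxy)).2

section Blowup

variable (n m t : ℕ) (C : SimpleGraph (Fin n))

set_option maxHeartbeats 1000000 in
open scoped Classical in
/-- 4a : injective homomorphism count equals `t! ·` clique count. -/
lemma card_F (t : ℕ) :
    (Finset.univ.filter fun f : Fin t → Fin n × Fin m =>
        Function.Injective f ∧ ∀ a b, ¬ C.Adj (f a).1 (f b).1).card
      = t.factorial * kcount t (SimpleGraph.comap (Prod.fst : Fin n × Fin m → Fin n) C)ᶜ := by
  set G := (SimpleGraph.comap (Prod.fst : Fin n × Fin m → Fin n) C)ᶜ with hG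
  have hGadj : ∀ u v : Fin n × Fin m, G.Adj u v ↔ u ≠ v ∧ ¬ C.Adj u.1 v.1 := by
    intro u v
    rw [hG, SimpleGraph.compl_adj, SimpleGraph.comap_adj]
  rw [Finset.card_eq_sum_card_fiberwise
    (f := fun f : Fin t → Fin n × Fin m => Finset.image f Finset.univ)
    (t := Finset.univ.filter fun s : Finset (Fin n × Fin m) => G.IsNClique t s)
    (fun f hf => by
      rw [Finset.mem_coe, Finset.mem_filter] at hf ⊢
      refine ⟨Finset.mem_univ _, G.isNClique_iff.mpr ⟨?_, ?_⟩⟩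
      · rw [SimpleGraph.isClique_iff]
        intro x hx y hy hxy
        rw [Finset.mem_coe] at hx hy
        obtain ⟨a, -, ha⟩ := Finset.mem_image.mp hx
        obtain ⟨b, -, hb⟩ := Finset.mem_image.mp hy
        rw [hGadj]
        refine ⟨hxy, ?_⟩
        rw [← ha, ← hb]
        exact hf.2.2 a b
      · rw [Finset.card_image_of_injective _ hf.2.1, Finset.card_univ, Fintype.card_fin])]
  have hfib : ∀ s ∈ Finset.univ.filter (fun s : Finset (Fin n × Fin m) => G.IsNClique t s),
      ((Finset.univ.filter fun f : Fin t → Fin n × Fin m =>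
          Function.Injective f ∧ ∀ a b, ¬ C.Adj (f a).1 (f b).1).filter
        (fun f => Finset.image f Finset.univ = s)).card = t.factorial := by
    intro s hs
    rw [Finset.mem_filter] at hs
    obtain ⟨hclq, hcard⟩ := G.isNClique_iff.mp hs.2
    rw [SimpleGraph.isClique_iff] at hclq
    rw [Finset.filter_filter]
    have hiff : ∀ f : Fin t → Fin n × Fin m,
        ((Function.Injective f ∧ ∀ a b, ¬ C.Adj (f a).1 (f b).1) ∧
          Finset.image f Finset.univ = s) ↔ Finset.image f Finset.univ = s := by
      intro f
      constructor
      · exact fun h => h.2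
      · intro h
        have hmem : ∀ a : Fin t, f a ∈ s := fun a => by
          rw [← h]; exact Finset.mem_image_of_mem _ (Finset.mem_univ _)
        have hinj : Function.Injective f := by
          rw [← Set.injOn_univ, ← Finset.coe_univ]
          apply Finset.injOn_of_card_image_eq
          rw [h, hcard, Finset.card_univ, Fintype.card_fin]
        refine ⟨⟨hinj, fun a b => ?_⟩, h⟩
        by_cases hab : f a = f b
        · rw [hab]; exact C.irrefl
        · exact ((hGadj _ _).mp (hclq (hmem a) (hmem b) hab)).2
    simp only [hiff]
    rw [card_image_eq_surjCard t s, hcard, surjCard_self]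
  rw [Finset.sum_congr rfl hfib, Finset.sum_const, smul_eq_mul, mul_comm]
  congr 1
  rw [kcount_eq]

set_option maxHeartbeats 1000000 in
open scoped Classical in
/-- C2 : counting lifts of a fixed projection. -/
lemma card_lifts (g : Fin t → Fin n) :
    (Finset.univ.filter fun f : Fin t → Fin n × Fin m =>
        Function.Injective f ∧ Prod.fst ∘ f = g).card
      = ∏ i : Fin n, m.descFactorial (Finset.univ.filter fun a => g a = i).card := by
  rw [← Fintype.card_subtype]
  have e : {f : Fin t → Fin n × Fin m // Function.Injective f ∧ Prod.fst ∘ f = g}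
      ≃ Π i : Fin n, ({a : Fin t // g a = i} ↪ Fin m) := by
    have key : ∀ (F : Π i : Fin n, ({a : Fin t // g a = i} ↪ Fin m)) (i j : Fin n)
        (hij : i = j) (x : Fin t) (hx : g x = i) (hx' : g x = j),
        F i ⟨x, hx⟩ = F j ⟨x, hx'⟩ := by
      rintro F i j rfl x hx hx'
      rfl
    refine
    { toFun := fun fh => fun i =>
        ⟨fun a => (fh.1 a.1).2, ?_⟩
      invFun := fun F =>
        ⟨fun a => (g a, F (g a) ⟨a, rfl⟩), ?_, rfl⟩
      left_inv := ?_
      right_inv := ?_ }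
    · intro a b hab
      have h1 : (fh.1 a.1).1 = g a.1 := congrFun fh.2.2 a.1
      have h2 : (fh.1 b.1).1 = g b.1 := congrFun fh.2.2 b.1
      have : fh.1 a.1 = fh.1 b.1 := by
        apply Prod.ext
        · rw [h1, h2, a.2, b.2]
        · exact hab
      exact Subtype.ext (fh.2.1 this)
    · intro a b hab
      have e1 : g a = g b := congrArg Prod.fst hab
      have e2 : F (g a) ⟨a, rfl⟩ = F (g b) ⟨b, rfl⟩ := congrArg Prod.snd hab
      have e3 : F (g b) ⟨b, rfl⟩ = F (g a) ⟨b, e1.symm⟩ := key F (g b) (g a) e1.symm b rfl e1.symm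
      have e4 : (⟨a, rfl⟩ : {x : Fin t // g x = g a}) = ⟨b, e1.symm⟩ :=
        (F (g a)).injective (by rw [e2, e3])
      exact congrArg Subtype.val e4
    · rintro ⟨f, hinj, hfst⟩
      apply Subtype.ext
      funext a
      apply Prod.ext
      · exact (congrFun hfst a).symm
      · rfl
    · intro F
      funext i
      apply DFunLike.ext
      intro a
      exact (key F (g a.1) i a.2 a.1 rfl a.2).trans (by rw [Subtype.coe_eta])
  rw [Fintype.card_congr e, Fintype.card_pi]
  apply Finset.prod_congr rfl
  intro i _
  rw [Fintype.card_embedding_eq, Fintype.card_fin, Fintype.card_subtype]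

set_option maxHeartbeats 1000000 in
open scoped Classical in
/-- 4b : fiber decomposition over the projection. -/
lemma card_F' (t : ℕ) :
    (Finset.univ.filter fun f : Fin t → Fin n × Fin m =>
        Function.Injective f ∧ ∀ a b, ¬ C.Adj (f a).1 (f b).1).card
      = ∑ g ∈ Finset.univ.filter (fun g : Fin t → Fin n => ∀ a b, ¬ C.Adj (g a) (g b)),
          ∏ i : Fin n, m.descFactorial (Finset.univ.filter fun a => g a = i).card := by
  rw [Finset.card_eq_sum_card_fiberwise
    (f := fun f : Fin t → Fin n × Fin m => Prod.fst ∘ f)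
    (t := Finset.univ.filter (fun g : Fin t → Fin n => ∀ a b, ¬ C.Adj (g a) (g b)))
    (fun f hf => by
      rw [Finset.mem_coe, Finset.mem_filter] at hf ⊢
      exact ⟨Finset.mem_univ _, fun a b => hf.2.2 a b⟩)]
  apply Finset.sum_congr rfl
  intro g hg
  rw [Finset.mem_filter] at hg
  rw [← card_lifts n m t g]
  congr 1
  rw [Finset.filter_filter]
  apply Finset.filter_congr
  intro f _
  constructor
  · exact fun h => ⟨h.1.1, h.2⟩
  · intro h
    refine ⟨⟨h.1, fun a b => ?_⟩, h.2⟩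
    have : ∀ a, (f a).1 = g a := congrFun h.2
    rw [this a, this b]
    exact hg.2 a b

end Blowup

lemma desc_div_pow_tendsto (c : ℕ) :
    Filter.Tendsto (fun m : ℕ => (m.descFactorial c : ℝ) / (m : ℝ) ^ c)
      Filter.atTop (nhds 1) := by
  have hfac : ∀ k : ℕ, Filter.Tendsto (fun m : ℕ => 1 - (k : ℝ) / (m : ℝ))
      Filter.atTop (nhds 1) := by
    intro k
    have h0 : Filter.Tendsto (fun m : ℕ => (k : ℝ) / (m : ℝ)) Filter.atTop (nhds 0) :=
      Filter.Tendsto.div_atTop tendsto_const_nhds tendsto_natCast_atTop_atTop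
    simpa using tendsto_const_nhds.sub h0
  have hprod := tendsto_finset_prod (M := ℝ) (α := ℕ) (x := Filter.atTop)
    (f := fun (k : ℕ) (m : ℕ) => 1 - (k : ℝ) / (m : ℝ)) (a := fun _ => 1)
    (Finset.range c) (fun k _ => hfac k)
  simp only [Finset.prod_const_one] at hprod
  apply Filter.Tendsto.congr' _ hprod
  filter_upwards [Filter.eventually_ge_atTop (max c 1)] with m hm
  have hc : c ≤ m := le_trans (le_max_left _ _) hm
  have hm1 : 1 ≤ m := le_trans (le_max_right _ _) hm
  have hm0 : (m : ℝ) ≠ 0 := by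
    simp only [ne_eq, Nat.cast_eq_zero]
    omega
  rw [Nat.descFactorial_eq_prod_range, Nat.cast_prod]
  have hterm : ∀ x ∈ Finset.range c, (1 : ℝ) - (x : ℝ) / (m : ℝ)
      = ((m - x : ℕ) : ℝ) / (m : ℝ) := by
    intro x hx
    rw [Finset.mem_range] at hx
    rw [Nat.cast_sub (by omega)]
    field_simp
  rw [Finset.prod_congr rfl hterm, Finset.prod_div_distrib, Finset.prod_const,
    Finset.card_range]

lemma tendsto_ratio (n t : ℕ) (hn : 1 ≤ n) (c : Fin n → ℕ) (hc : ∑ i, c i = t) :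
    Filter.Tendsto (fun m : ℕ => (∏ i, (m.descFactorial (c i) : ℝ)) /
      ((t.factorial : ℝ) * ((m * n).choose t : ℝ))) Filter.atTop (nhds (1 / (n : ℝ) ^ t)) := by
  have hA : Filter.Tendsto (fun m : ℕ => ∏ i, ((m.descFactorial (c i) : ℝ) / (m : ℝ) ^ (c i)))
      Filter.atTop (nhds 1) := by
    have h := tendsto_finset_prod (M := ℝ) (α := ℕ) (x := Filter.atTop)
      (f := fun (i : Fin n) (m : ℕ) => (m.descFactorial (c i) : ℝ) / (m : ℝ) ^ (c i))
      (a := fun _ => 1) Finset.univ (fun i _ => desc_div_pow_tendsto (c i))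
    simpa using h
  have hmn : Filter.Tendsto (fun m : ℕ => m * n) Filter.atTop Filter.atTop :=
    tendsto_atTop_mono (fun m => Nat.le_mul_of_pos_right m (by omega)) Filter.tendsto_id
  have hB0 : Filter.Tendsto (fun m : ℕ => (((m * n).descFactorial t : ℝ)) / ((m * n : ℕ) : ℝ) ^ t)
      Filter.atTop (nhds 1) := (desc_div_pow_tendsto t).comp hmn
  have hB : Filter.Tendsto (fun m : ℕ => (((m * n : ℕ) : ℝ)) ^ t / ((m * n).descFactorial t : ℝ))
      Filter.atTop (nhds 1) := by
    have h := hB0.inv₀ one_ne_zero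
    simpa [inv_div] using h
  have hmain := (hA.mul hB).mul (tendsto_const_nhds (x := 1 / (n : ℝ) ^ t) (f := Filter.atTop (α := ℕ)))
  rw [one_mul, one_mul] at hmain
  apply Filter.Tendsto.congr' _ hmain
  filter_upwards [Filter.eventually_ge_atTop (max t 1)] with m hm
  have hmt : t ≤ m := le_trans (le_max_left _ _) hm
  have hm1 : 1 ≤ m := le_trans (le_max_right _ _) hm
  have hm0 : (m : ℝ) ≠ 0 := by
    simp only [ne_eq, Nat.cast_eq_zero]; omega
  have hn0 : (n : ℝ) ≠ 0 := by
    simp only [ne_eq, Nat.cast_eq_zero]; omega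
  have hmnt : t ≤ m * n := le_trans hmt (Nat.le_mul_of_pos_right m (by omega))
  have hd : ((m * n).descFactorial t : ℝ) ≠ 0 := by
    simp only [ne_eq, Nat.cast_eq_zero, Nat.descFactorial_eq_zero_iff_lt]; omega
  have hfac : (t.factorial : ℝ) ≠ 0 := Nat.cast_ne_zero.mpr t.factorial_ne_zero
  have key : (t.factorial : ℝ) * ((m * n).choose t : ℝ) = ((m * n).descFactorial t : ℝ) := by
    exact_mod_cast (congrArg (Nat.cast : ℕ → ℝ)
      (Nat.descFactorial_eq_factorial_mul_choose (m * n) t)).symm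
  have hpow : ∏ i : Fin n, (m : ℝ) ^ (c i) = (m : ℝ) ^ t := by
    rw [Finset.prod_pow_eq_pow_sum, hc]
  rw [key, Finset.prod_div_distrib, hpow]
  have hcast : ((m * n : ℕ) : ℝ) = (m : ℝ) * (n : ℝ) := by push_cast; ring
  rw [hcast, mul_pow]
  field_simp

end Aux

set_option maxHeartbeats 1000000 in
open scoped Classical in
/-- For a graph `C` on `n ≥ 1` vertices and `t ≥ 1`, the `K_t`-density of the complement
of the `m`-fold blow-up `C[m]` (realized as the comap of `C` along the projection
`Fin n × Fin m → Fin n`) tends to `(Σ_{j=1}^{t} j! · S(t,j) · k_j(Cᶜ)) / n^t`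
as `m → ∞`. -/
theorem blowup_complement_clique_density (n t : ℕ) (hn : 1 ≤ n) (ht : 1 ≤ t)
    (C : SimpleGraph (Fin n)) :
    Filter.Tendsto (fun m : ℕ =>
        (kcount t (SimpleGraph.comap (Prod.fst : Fin n × Fin m → Fin n) C)ᶜ : ℝ) /
          ((m * n).choose t : ℝ))
      Filter.atTop
      (nhds ((∑ j ∈ Finset.Icc 1 t,
          (j.factorial : ℝ) * stirling2 t j * (kcount j Cᶜ : ℝ)) / (n : ℝ) ^ t)) := by
  have hfac : (t.factorial : ℝ) ≠ 0 := Nat.cast_ne_zero.mpr t.factorial_ne_zero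
  -- the set of projections with independent image
  set GS := Finset.univ.filter (fun g : Fin t → Fin n => ∀ a b, ¬ C.Adj (g a) (g b)) with hGS
  -- rewrite the density as a finite sum of ratios
  have hfun : ∀ m : ℕ,
      (∑ g ∈ GS, (∏ i : Fin n,
          (m.descFactorial (Finset.univ.filter fun a => g a = i).card : ℝ)) /
            ((t.factorial : ℝ) * ((m * n).choose t : ℝ)))
      = (kcount t (SimpleGraph.comap (Prod.fst : Fin n × Fin m → Fin n) C)ᶜ : ℝ) /
          ((m * n).choose t : ℝ) := by
    intro m
    have h1 := (card_F n m C t).symm.trans (card_F' n m C t)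
    have h2 : (t.factorial : ℝ) *
        (kcount t (SimpleGraph.comap (Prod.fst : Fin n × Fin m → Fin n) C)ᶜ : ℝ)
        = ∑ g ∈ GS, ∏ i : Fin n,
            (m.descFactorial (Finset.univ.filter fun a => g a = i).card : ℝ) := by
      rw [hGS]
      exact_mod_cast congrArg (Nat.cast : ℕ → ℝ) h1
    rw [← Finset.sum_div, ← h2, mul_div_mul_left _ _ hfac]
  -- termwise limits
  have hc : ∀ g : Fin t → Fin n,
      ∑ i : Fin n, (Finset.univ.filter fun a => g a = i).card = t := by
    intro g
    have h := Finset.card_eq_sum_card_fiberwise (f := g)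
      (s := (Finset.univ : Finset (Fin t))) (t := Finset.univ) (fun x _ => Finset.mem_univ _)
    rw [Finset.card_univ, Fintype.card_fin] at h
    exact h.symm
  have hsum : Filter.Tendsto (fun m : ℕ =>
      ∑ g ∈ GS, (∏ i : Fin n,
          (m.descFactorial (Finset.univ.filter fun a => g a = i).card : ℝ)) /
            ((t.factorial : ℝ) * ((m * n).choose t : ℝ)))
      Filter.atTop (nhds (∑ _g ∈ GS, 1 / (n : ℝ) ^ t)) :=
    tendsto_finset_sum _ (fun g _ => tendsto_ratio n t hn _ (hc g))
  have hval : (∑ _g ∈ GS, 1 / (n : ℝ) ^ t)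
      = (∑ j ∈ Finset.Icc 1 t,
          (j.factorial : ℝ) * stirling2 t j * (kcount j Cᶜ : ℝ)) / (n : ℝ) ^ t := by
    rw [Finset.sum_const, nsmul_eq_mul]
    have hcard : (GS.card : ℝ)
        = ∑ j ∈ Finset.Icc 1 t, (j.factorial : ℝ) * stirling2 t j * (kcount j Cᶜ : ℝ) := by
      rw [hGS, card_good n t ht C]
      push_cast
      apply Finset.sum_congr rfl
      intro j _
      have hsj : (surjCard t j : ℝ) = (j.factorial : ℝ) * stirling2 t j := by
        rw [stirling2, surjCard_eq_real t j]
        field_simp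
      rw [hsj]
    rw [hcard, mul_one_div]
  rw [← hval]
  exact Filter.Tendsto.congr hfun hsum
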